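/- arXiv:0906.5055 — 2 statements merged into one kernel-verified Lean document; each statement's English description precedes it below -/
import Mathlib

section
/- Let X and Y be complex Banach spaces, A ∈ B(X), B ∈ B(Y), C ∈ B(Y, X), and let M_C ∈ B(X ⊕ Y) be the upper-triangular operator matrix M_C(x, y) = (Ax + Cy, By). If B is invertible in B(Y), then M_C has finite descent if and only if A has finite descent. -/
noncomputable section

open ContinuousLinearMap Metric Set

variable {E : Type*} [NormedAddCommGroup E] [NormedSpace ℂ E]
variable {X Y : Type*} [NormedAddCommGroup X] [NormedSpace ℂ X] [CompleteSpace X]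
  [NormedAddCommGroup Y] [NormedSpace ℂ Y] [CompleteSpace Y]

/-- `T` has finite descent: some power has the same range as the next one. -/
def HasFiniteDescent (T : E →L[ℂ] E) : Prop :=
  ∃ k : ℕ, LinearMap.range ((T ^ k : E →L[ℂ] E) : E →ₗ[ℂ] E) = LinearMap.range ((T ^ (k + 1) : E →L[ℂ] E) : E →ₗ[ℂ] E)

/-- The upper-triangular operator matrix `M_C (x, y) = (A x + C y, B y)` on `X ⊕ Y`. -/
def ucMat (A : X →L[ℂ] X) (B : Y →L[ℂ] Y) (C : Y →L[ℂ] X) :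
    (X × Y) →L[ℂ] (X × Y) :=
  (A.comp (ContinuousLinearMap.fst ℂ X Y) + C.comp (ContinuousLinearMap.snd ℂ X Y)).prod
    (B.comp (ContinuousLinearMap.snd ℂ X Y))

lemma ucMat_apply (A : X →L[ℂ] X) (B : Y →L[ℂ] Y) (C : Y →L[ℂ] X) (p : X × Y) :
    ucMat A B C p = (A p.1 + C p.2, B p.2) := rfl

/-- The off-diagonal entry of `(ucMat A B C)^n`. -/
def ucD (A : X →L[ℂ] X) (B : Y →L[ℂ] Y) (C : Y →L[ℂ] X) : ℕ → (Y →L[ℂ] X)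
  | 0 => 0
  | n + 1 => (A ^ n).comp C + (ucD A B C n).comp B

lemma ucMat_pow (A : X →L[ℂ] X) (B : Y →L[ℂ] Y) (C : Y →L[ℂ] X) (n : ℕ) :
    (ucMat A B C) ^ n = ucMat (A ^ n) (B ^ n) (ucD A B C n) := by
  induction n with
  | zero =>
    ext p <;> simp [ucMat_apply, ucD]
  | succ n ih =>
    rw [pow_succ, ih]
    ext p <;>
      simp [ucMat_apply, ucD, pow_succ, mul_apply, add_comm]

lemma mem_range_ucMat {A : X →L[ℂ] X} {B : Y →L[ℂ] Y} {C : Y →L[ℂ] X}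
    {g : Y →L[ℂ] Y} (hgB : ∀ y, g (B y) = y) (hBg : ∀ y, B (g y) = y)
    (w : X) (z : Y) :
    (w, z) ∈ LinearMap.range ((ucMat A B C : (X × Y) →L[ℂ] (X × Y)) : (X × Y) →ₗ[ℂ] (X × Y)) ↔
      w - C (g z) ∈ LinearMap.range (A : X →ₗ[ℂ] X) := by
  constructor
  · rintro ⟨p, hp⟩
    rw [ContinuousLinearMap.coe_coe, ucMat_apply, Prod.mk.injEq] at hp
    obtain ⟨h1, h2⟩ := hp
    refine ⟨p.1, ?_⟩
    have : g z = p.2 := by rw [← h2, hgB]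
    rw [ContinuousLinearMap.coe_coe, this, ← h1]
    abel
  · rintro ⟨x, hx⟩
    refine ⟨(x, g z), ?_⟩
    rw [ContinuousLinearMap.coe_coe, ucMat_apply]
    simp only [hBg]
    rw [ContinuousLinearMap.coe_coe] at hx; rw [hx]
    simp [Prod.ext_iff]

theorem stmt0 (A : X →L[ℂ] X) (B : Y →L[ℂ] Y) (C : Y →L[ℂ] X) (hB : IsUnit B) :
    HasFiniteDescent (ucMat A B C) ↔ HasFiniteDescent A := by
  obtain ⟨u, hu⟩ := hB
  -- inverses of B^n
  set g : ℕ → (Y →L[ℂ] Y) := fun n => ((u ^ n)⁻¹ : (Y →L[ℂ] Y)ˣ) with hg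
  have hgB : ∀ n y, g n ((B ^ n) y) = y := by
    intro n y
    have : (g n) * (B ^ n) = 1 := by
      rw [hg, ← hu, ← Units.val_pow_eq_pow_val]; exact (u ^ n).inv_mul
    calc g n ((B ^ n) y) = ((g n) * (B ^ n)) y := rfl
    _ = y := by rw [this]; rfl
  have hBg : ∀ n y, (B ^ n) (g n y) = y := by
    intro n y
    have : (B ^ n) * (g n) = 1 := by
      rw [hg, ← hu, ← Units.val_pow_eq_pow_val]; exact (u ^ n).mul_inv
    calc (B ^ n) ((g n) y) = ((B ^ n) * (g n)) y := rfl
    _ = y := by rw [this]; rfl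
  have hchar : ∀ n (w : X) (z : Y),
      (w, z) ∈ LinearMap.range (((ucMat A B C) ^ n : (X × Y) →L[ℂ] (X × Y)) : (X × Y) →ₗ[ℂ] (X × Y)) ↔
        w - (ucD A B C n) (g n z) ∈ LinearMap.range ((A ^ n : X →L[ℂ] X) : X →ₗ[ℂ] X) := by
    intro n w z
    rw [ucMat_pow]
    exact mem_range_ucMat (hgB n) (hBg n) w z
  constructor
  · rintro ⟨k, hk⟩
    refine ⟨k, ?_⟩
    ext w
    have h1 := hchar k w 0
    have h2 := hchar (k + 1) w 0
    rw [← hk] at h2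
    simp only [map_zero, sub_zero] at h1 h2
    rw [← h1, ← h2]
  · rintro ⟨k, hk⟩
    refine ⟨k, ?_⟩
    ext ⟨w, z⟩
    rw [hchar k w z, hchar (k + 1) w z, ← hk]
    -- difference lies in range (A ^ k)
    have hgsucc : B (g (k + 1) z) = g k z := by
      have := hgB k (B (g (k + 1) z))
      rw [show (B ^ k) (B (g (k + 1) z)) = (B ^ (k + 1)) (g (k + 1) z) by
        rw [pow_succ]; rfl, hBg] at this
      exact this.symm
    have hdiff : (ucD A B C (k + 1)) (g (k + 1) z) - (ucD A B C k) (g k z)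
        ∈ LinearMap.range ((A ^ k : X →L[ℂ] X) : X →ₗ[ℂ] X) := by
      show ((A ^ k).comp C + (ucD A B C k).comp B) (g (k + 1) z) - _ ∈ _
      simp only [add_apply, comp_apply, hgsucc]
      refine ⟨C (g (k + 1) z), ?_⟩; rw [ContinuousLinearMap.coe_coe]
      abel
    constructor
    · intro h
      have := Submodule.sub_mem _ h hdiff
      have e : w - (ucD A B C k) (g k z) -
          ((ucD A B C (k + 1)) (g (k + 1) z) - (ucD A B C k) (g k z)) =
          w - (ucD A B C (k + 1)) (g (k + 1) z) := by abel
      rwa [e] at this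
    · intro h
      have := Submodule.add_mem _ h hdiff
      have e : w - (ucD A B C (k + 1)) (g (k + 1) z) +
          ((ucD A B C (k + 1)) (g (k + 1) z) - (ucD A B C k) (g k z)) =
          w - (ucD A B C k) (g k z) := by abel
      rwa [e] at this
end
end

section
/- Let X and Y be complex Banach spaces, A ∈ B(X), C ∈ B(Y, X), and let M_C ∈ B(X ⊕ Y) be the upper-triangular operator matrix with B = 0, i.e. M_C(x, y) = (Ax + Cy, 0). Then M_C has finite descent if and only if A has finite descent. -/
noncomputable section

open ContinuousLinearMap Metric Set

variable {E : Type*} [NormedAddCommGroup E] [NormedSpace ℂ E]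
variable {X Y : Type*} [NormedAddCommGroup X] [NormedSpace ℂ X] [CompleteSpace X]
  [NormedAddCommGroup Y] [NormedSpace ℂ Y] [CompleteSpace Y]

lemma map_pow_succ (T : E →L[ℂ] E) (R : Submodule ℂ E) (n : ℕ) :
    Submodule.map ((T ^ (n+1) : E →L[ℂ] E) : E →ₗ[ℂ] E) R = Submodule.map (T : E →ₗ[ℂ] E) (Submodule.map ((T ^ n : E →L[ℂ] E) : E →ₗ[ℂ] E) R) := by
  ext x
  simp only [Submodule.mem_map, pow_succ', mul_apply, ContinuousLinearMap.coe_coe]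
  constructor
  · rintro ⟨y, hy, rfl⟩; exact ⟨(T^n) y, ⟨y, hy, rfl⟩, rfl⟩
  · rintro ⟨z, ⟨y, hy, rfl⟩, rfl⟩; exact ⟨y, hy, rfl⟩

lemma map_pow_succ' (T : E →L[ℂ] E) (R : Submodule ℂ E) (n : ℕ) :
    Submodule.map ((T ^ (n+1) : E →L[ℂ] E) : E →ₗ[ℂ] E) R = Submodule.map ((T ^ n : E →L[ℂ] E) : E →ₗ[ℂ] E) (Submodule.map (T : E →ₗ[ℂ] E) R) := by
  ext x
  simp only [Submodule.mem_map, pow_succ, mul_apply, ContinuousLinearMap.coe_coe]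
  constructor
  · rintro ⟨y, hy, rfl⟩; exact ⟨T y, ⟨y, hy, rfl⟩, rfl⟩
  · rintro ⟨z, ⟨y, hy, rfl⟩, rfl⟩; exact ⟨y, hy, rfl⟩

lemma range_pow_succ (T : E →L[ℂ] E) (n : ℕ) :
    LinearMap.range ((T ^ (n+1) : E →L[ℂ] E) : E →ₗ[ℂ] E) = Submodule.map (T : E →ₗ[ℂ] E) (LinearMap.range ((T ^ n : E →L[ℂ] E) : E →ₗ[ℂ] E)) := by
  ext x
  simp only [LinearMap.mem_range, Submodule.mem_map, pow_succ', mul_apply, ContinuousLinearMap.coe_coe]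
  constructor
  · rintro ⟨y, rfl⟩; exact ⟨(T^n) y, ⟨y, rfl⟩, rfl⟩
  · rintro ⟨z, ⟨y, rfl⟩, rfl⟩; exact ⟨y, rfl⟩

lemma range_pow_succ' (T : E →L[ℂ] E) (n : ℕ) :
    LinearMap.range ((T ^ (n+1) : E →L[ℂ] E) : E →ₗ[ℂ] E) = Submodule.map ((T ^ n : E →L[ℂ] E) : E →ₗ[ℂ] E) (LinearMap.range (T : E →ₗ[ℂ] E)) := by
  ext x
  simp only [LinearMap.mem_range, Submodule.mem_map, pow_succ, mul_apply, ContinuousLinearMap.coe_coe]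
  constructor
  · rintro ⟨y, rfl⟩; exact ⟨T y, ⟨y, rfl⟩, rfl⟩
  · rintro ⟨z, ⟨y, rfl⟩, rfl⟩; exact ⟨y, rfl⟩

lemma map_stable (T : E →L[ℂ] E) (R : Submodule ℂ E) (k : ℕ)
    (h : Submodule.map ((T ^ k : E →L[ℂ] E) : E →ₗ[ℂ] E) R = Submodule.map ((T ^ (k+1) : E →L[ℂ] E) : E →ₗ[ℂ] E) R) (j : ℕ) :
    Submodule.map ((T ^ (k+j) : E →L[ℂ] E) : E →ₗ[ℂ] E) R = Submodule.map ((T ^ k : E →L[ℂ] E) : E →ₗ[ℂ] E) R := by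
  induction j with
  | zero => rfl
  | succ j ih =>
      have : k + (j+1) = (k+j) + 1 := by ring
      rw [this, map_pow_succ, ih, ← map_pow_succ, ← h]

lemma range_stable (T : E →L[ℂ] E) (k : ℕ)
    (h : LinearMap.range ((T ^ k : E →L[ℂ] E) : E →ₗ[ℂ] E) = LinearMap.range ((T ^ (k+1) : E →L[ℂ] E) : E →ₗ[ℂ] E)) (j : ℕ) :
    LinearMap.range ((T ^ (k+j) : E →L[ℂ] E) : E →ₗ[ℂ] E) = LinearMap.range ((T ^ k : E →L[ℂ] E) : E →ₗ[ℂ] E) := by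
  induction j with
  | zero => rfl
  | succ j ih =>
      have : k + (j+1) = (k+j) + 1 := by ring
      rw [this, range_pow_succ, ih, ← range_pow_succ, ← h]

lemma ucMat_pow_range (A : X →L[ℂ] X) (C : Y →L[ℂ] X) (n : ℕ) :
    LinearMap.range ((ucMat A (0 : Y →L[ℂ] Y) C ^ (n+1) : (X × Y) →L[ℂ] (X × Y)) : (X × Y) →ₗ[ℂ] (X × Y)) =
      (Submodule.map ((A ^ n : X →L[ℂ] X) : X →ₗ[ℂ] X) (LinearMap.range (A : X →ₗ[ℂ] X) ⊔ LinearMap.range (C : Y →ₗ[ℂ] X))).prod ⊥ := by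
  induction n with
  | zero =>
      rw [zero_add, pow_one]
      ext ⟨x, y⟩
      constructor
      · rintro ⟨⟨a, b⟩, h⟩
        have h' : (A a + C b, (0:Y)) = (x, y) := by simpa [ucMat] using h
        rw [Prod.mk.injEq] at h'
        obtain ⟨h1, h2⟩ := h'
        refine ⟨⟨A a + C b, Submodule.add_mem_sup ⟨a, rfl⟩ ⟨b, rfl⟩, ?_⟩, ?_⟩
        · simpa using h1
        · simpa using h2.symm
      · rintro ⟨⟨z, hz, hzx⟩, hy⟩
        have hy0 : y = 0 := by simpa using hy
        have hzx' : z = x := by simpa using hzx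
        subst hy0; subst hzx'
        obtain ⟨u, ⟨a, rfl⟩, v, ⟨b, rfl⟩, rfl⟩ := Submodule.mem_sup.mp hz
        exact ⟨(a, b), by simp [ucMat]⟩
  | succ n ih =>
      rw [range_pow_succ, ih, map_pow_succ]
      ext ⟨x, y⟩
      constructor
      · rintro ⟨⟨u, v⟩, ⟨hu, hv⟩, h⟩
        have hv0 : v = 0 := by simpa using hv
        subst hv0
        simp only [ucMat, prod_apply, coe_comp', Function.comp_apply, coe_fst', coe_snd',
          add_apply, zero_apply, map_zero, add_zero, Prod.mk.injEq, ContinuousLinearMap.coe_coe] at h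
        obtain ⟨h1, h2⟩ := h
        subst h1; subst h2
        exact ⟨⟨u, hu, rfl⟩, rfl⟩
      · rintro ⟨⟨u, hu, h1⟩, h2⟩
        have h20 : y = 0 := by simpa using h2
        subst h20
        refine ⟨(u, 0), ⟨hu, Submodule.zero_mem _⟩, ?_⟩
        simp [ucMat, show A u = x by simpa using h1]

theorem stmt1 (A : X →L[ℂ] X) (C : Y →L[ℂ] X) :
    HasFiniteDescent (ucMat A (0 : Y →L[ℂ] Y) C) ↔ HasFiniteDescent A := by
  set R : Submodule ℂ X := LinearMap.range (A : X →ₗ[ℂ] X) ⊔ LinearMap.range (C : Y →ₗ[ℂ] X) with hR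
  have hAR : Submodule.map (A : X →ₗ[ℂ] X) R ≤ R := by
    rintro x ⟨u, hu, rfl⟩
    exact Submodule.mem_sup_left ⟨u, rfl⟩
  have hprod : ∀ S T : Submodule ℂ X, S.prod (⊥ : Submodule ℂ Y) = T.prod ⊥ → S = T := by
    intro S T h
    ext x
    constructor
    · intro hx
      have : (x, (0:Y)) ∈ S.prod (⊥ : Submodule ℂ Y) := ⟨hx, Submodule.zero_mem _⟩
      rw [h] at this; exact this.1
    · intro hx
      have : (x, (0:Y)) ∈ T.prod (⊥ : Submodule ℂ Y) := ⟨hx, Submodule.zero_mem _⟩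
      rw [← h] at this; exact this.1
  constructor
  · rintro ⟨k, hk⟩
    -- shift to exponent k+1 ≥ 1
    have hk1 : LinearMap.range ((ucMat A (0 : Y →L[ℂ] Y) C ^ (k+1) : (X × Y) →L[ℂ] (X × Y)) : (X × Y) →ₗ[ℂ] (X × Y))
        = LinearMap.range ((ucMat A (0 : Y →L[ℂ] Y) C ^ (k+1+1) : (X × Y) →L[ℂ] (X × Y)) : (X × Y) →ₗ[ℂ] (X × Y)) := by
      rw [range_pow_succ (n := k), range_pow_succ (n := k+1), hk]
    rw [ucMat_pow_range, ucMat_pow_range] at hk1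
    have hmap : Submodule.map ((A ^ k : X →L[ℂ] X) : X →ₗ[ℂ] X) R = Submodule.map ((A ^ (k+1) : X →L[ℂ] X) : X →ₗ[ℂ] X) R := hprod _ _ hk1
    refine ⟨k+1, le_antisymm ?_ ?_⟩
    · -- range A^{k+1} ≤ range A^{k+2}
      have h1 : LinearMap.range ((A ^ (k+1) : X →L[ℂ] X) : X →ₗ[ℂ] X) ≤ Submodule.map ((A ^ k : X →L[ℂ] X) : X →ₗ[ℂ] X) R := by
        rw [range_pow_succ']
        exact Submodule.map_mono (le_sup_left : LinearMap.range (A : X →ₗ[ℂ] X) ≤ R)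
      have h2 : Submodule.map ((A ^ k : X →L[ℂ] X) : X →ₗ[ℂ] X) R = Submodule.map ((A ^ (k+2) : X →L[ℂ] X) : X →ₗ[ℂ] X) R :=
        (map_stable A R k hmap 2).symm
      have h3 : Submodule.map ((A ^ (k+2) : X →L[ℂ] X) : X →ₗ[ℂ] X) R ≤ LinearMap.range ((A ^ (k+2) : X →L[ℂ] X) : X →ₗ[ℂ] X) := by
        rintro x ⟨u, hu, rfl⟩; exact ⟨u, rfl⟩
      exact h1.trans (h2.le.trans h3)
    · rw [range_pow_succ' (n := k+1)]
      rintro x ⟨u, ⟨v, rfl⟩, rfl⟩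
      exact ⟨A v, rfl⟩
  · rintro ⟨k, hk⟩
    refine ⟨k+2, ?_⟩
    rw [ucMat_pow_range, ucMat_pow_range]
    congr 1
    refine le_antisymm ?_ ?_
    · -- map A^{k+1} R ≤ map A^{k+2} R
      have h1 : Submodule.map ((A ^ (k+1) : X →L[ℂ] X) : X →ₗ[ℂ] X) R ≤ LinearMap.range ((A ^ (k+1) : X →L[ℂ] X) : X →ₗ[ℂ] X) := by
        rintro x ⟨u, hu, rfl⟩; exact ⟨u, rfl⟩
      have h2 : LinearMap.range ((A ^ (k+1) : X →L[ℂ] X) : X →ₗ[ℂ] X) = LinearMap.range ((A ^ (k+3) : X →L[ℂ] X) : X →ₗ[ℂ] X) :=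
        (range_stable A k hk 1).trans (range_stable A k hk 3).symm
      have h3 : LinearMap.range ((A ^ (k+3) : X →L[ℂ] X) : X →ₗ[ℂ] X) ≤ Submodule.map ((A ^ (k+2) : X →L[ℂ] X) : X →ₗ[ℂ] X) R := by
        rw [show (k+3) = (k+2)+1 from rfl, range_pow_succ' (n := k+2)]
        exact Submodule.map_mono (le_sup_left : LinearMap.range (A : X →ₗ[ℂ] X) ≤ R)
      exact h1.trans (h2.le.trans h3)
    · rw [map_pow_succ']
      exact Submodule.map_mono hAR
end
end
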